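/- Let f_1,…,f_n : ℝ^d → ℝ be differentiable with L-Lipschitz gradients and f = (1/n)∑_{i=1}^n f_i. For any points x^{(1)},…,x^{(n)} ∈ ℝ^d with mean x̄ = (1/n)∑_i x^{(i)}, ∑_{i=1}^n ‖ ∇f_i(x^{(i)}) − (1/n)∑_{k=1}^n ∇f_k(x^{(k)}) ‖² ≤ 6L²·∑_{i=1}^n ‖x^{(i)} − x̄‖² + 3·∑_{i=1}^n ‖∇f_i(x̄) − ∇f(x̄)‖². -/

import Mathlib

open Real Finset

lemma sq3 {a b c d : ℝ} (ha : 0 ≤ a) (hb : 0 ≤ b) (hc : 0 ≤ c) (hd0 : 0 ≤ d)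
    (hd : d ≤ a + b + c) : d ^ 2 ≤ 3 * a ^ 2 + 3 * b ^ 2 + 3 * c ^ 2 := by
  nlinarith [sq_nonneg (a - b), sq_nonneg (b - c), sq_nonneg (a - c),
    mul_le_mul hd hd hd0 (by linarith : (0:ℝ) ≤ a + b + c)]

lemma sq_le_sq'' {a b : ℝ} (ha : 0 ≤ a) (hb : 0 ≤ b) (h : a ≤ b) : a ^ 2 ≤ b ^ 2 := by
  nlinarith

lemma grad_avg {n d : ℕ} (f : Fin n → EuclideanSpace ℝ (Fin d) → ℝ)
    (hdiff : ∀ i, Differentiable ℝ (f i)) (c : ℝ) (xbar : EuclideanSpace ℝ (Fin d)) :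
    gradient (fun x => c * ∑ i, f i x) xbar = c • ∑ i, gradient (f i) xbar := by
  have h2 : ∀ i : Fin n, HasFDerivAt (f i)
      (InnerProductSpace.toDual ℝ _ (gradient (f i) xbar)) xbar :=
    fun i => ((hdiff i xbar).hasGradientAt).hasFDerivAt
  have h3 : HasFDerivAt (fun x => ∑ i, f i x)
      (∑ i, InnerProductSpace.toDual ℝ _ (gradient (f i) xbar)) xbar :=
    HasFDerivAt.fun_sum (fun i _ => h2 i)
  have h5 : HasGradientAt (fun x => c * ∑ i, f i x)
      (c • ∑ i, gradient (f i) xbar) xbar := by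
    rw [hasGradientAt_iff_hasFDerivAt]
    convert h3.const_mul c using 1
    · rfl
    simp [map_smul, map_sum]
  exact h5.gradient

theorem statement6 {n d : ℕ} (hn : 1 ≤ n) (L : ℝ) (hL : 0 ≤ L)
    (f : Fin n → EuclideanSpace ℝ (Fin d) → ℝ)
    (hdiff : ∀ i, Differentiable ℝ (f i))
    (hlip : ∀ i x y, ‖gradient (f i) x - gradient (f i) y‖ ≤ L * ‖x - y‖)
    (F : EuclideanSpace ℝ (Fin d) → ℝ)
    (hF : F = fun x => (1 / (n : ℝ)) * ∑ i, f i x)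
    (x : Fin n → EuclideanSpace ℝ (Fin d))
    (xbar : EuclideanSpace ℝ (Fin d))
    (hxbar : xbar = (1 / (n : ℝ)) • ∑ i, x i) :
    ∑ i, ‖gradient (f i) (x i) - (1 / (n : ℝ)) • ∑ k, gradient (f k) (x k)‖ ^ 2 ≤
      6 * L ^ 2 * ∑ i, ‖x i - xbar‖ ^ 2 +
        3 * ∑ i, ‖gradient (f i) xbar - gradient F xbar‖ ^ 2 := by
  have hn0 : (0:ℝ) < n := by exact_mod_cast hn
  set g : Fin n → EuclideanSpace ℝ (Fin d) := fun i => gradient (f i) (x i) with hg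
  set h : Fin n → EuclideanSpace ℝ (Fin d) := fun i => gradient (f i) xbar with hh
  set G : EuclideanSpace ℝ (Fin d) := gradient F xbar with hGdef
  set gbar : EuclideanSpace ℝ (Fin d) := (1 / (n : ℝ)) • ∑ k, g k with hgbar
  have hG : G = (1 / (n : ℝ)) • ∑ i, h i := by
    rw [hGdef, hF]; exact grad_avg f hdiff _ xbar
  have hA : ∀ i, ‖g i - h i‖ ≤ L * ‖x i - xbar‖ := fun i => hlip i _ _
  set S : ℝ := ∑ i, ‖x i - xbar‖ ^ 2 with hS
  have hSnn : 0 ≤ S := Finset.sum_nonneg fun i _ => sq_nonneg _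
  have hA2 : ∀ i, ‖g i - h i‖ ^ 2 ≤ L ^ 2 * ‖x i - xbar‖ ^ 2 := by
    intro i
    have h2 := sq_le_sq'' (norm_nonneg _) (mul_nonneg hL (norm_nonneg _)) (hA i)
    calc ‖g i - h i‖ ^ 2 ≤ (L * ‖x i - xbar‖) ^ 2 := h2
      _ = L ^ 2 * ‖x i - xbar‖ ^ 2 := by ring
  -- bound on ‖gbar - G‖^2
  have hdiffc : gbar - G = (1 / (n : ℝ)) • ∑ i, (g i - h i) := by
    rw [hgbar, hG, ← smul_sub, Finset.sum_sub_distrib]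
  have hnorm1 : ‖gbar - G‖ ≤ (1 / (n : ℝ)) * ∑ i, ‖g i - h i‖ := by
    rw [hdiffc, norm_smul]
    gcongr
    · simp [abs_of_nonneg (le_of_lt (by positivity : (0:ℝ) < 1/(n:ℝ)))]
    · exact norm_sum_le _ _
  have hcs : (∑ i, ‖g i - h i‖) ^ 2 ≤ (n : ℝ) * ∑ i, ‖g i - h i‖ ^ 2 := by
    have := sq_sum_le_card_mul_sum_sq (s := Finset.univ) (f := fun i => ‖g i - h i‖)
    simpa using this
  have hsum2 : ∑ i, ‖g i - h i‖ ^ 2 ≤ L ^ 2 * S := by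
    rw [hS, Finset.mul_sum]; exact Finset.sum_le_sum fun i _ => hA2 i
  have hC : ‖gbar - G‖ ^ 2 ≤ (L ^ 2 / n) * S := by
    have h1 : ‖gbar - G‖ ^ 2 ≤ ((1 / (n : ℝ)) * ∑ i, ‖g i - h i‖) ^ 2 :=
      sq_le_sq'' (norm_nonneg _)
        (mul_nonneg (by positivity) (Finset.sum_nonneg fun i _ => norm_nonneg _)) hnorm1
    calc ‖gbar - G‖ ^ 2 ≤ ((1 / (n : ℝ)) * ∑ i, ‖g i - h i‖) ^ 2 := h1
      _ = (1 / (n:ℝ))^2 * (∑ i, ‖g i - h i‖) ^ 2 := by ring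
      _ ≤ (1 / (n:ℝ))^2 * ((n:ℝ) * (L ^ 2 * S)) := by
          gcongr
          calc (∑ i, ‖g i - h i‖) ^ 2 ≤ (n : ℝ) * ∑ i, ‖g i - h i‖ ^ 2 := hcs
            _ ≤ (n:ℝ) * (L^2 * S) := by gcongr
      _ = (L ^ 2 / n) * S := by field_simp
  -- pointwise bound
  have hpt : ∀ i, ‖g i - gbar‖ ^ 2 ≤
      3 * ‖g i - h i‖ ^ 2 + 3 * ‖h i - G‖ ^ 2 + 3 * ‖G - gbar‖ ^ 2 := by
    intro i
    have htri : ‖g i - gbar‖ ≤ ‖g i - h i‖ + ‖h i - G‖ + ‖G - gbar‖ := by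
      calc ‖g i - gbar‖ = ‖(g i - h i) + (h i - G) + (G - gbar)‖ := by abel_nf
        _ ≤ _ := norm_add₃_le
    exact sq3 (norm_nonneg _) (norm_nonneg _) (norm_nonneg _) (norm_nonneg _) htri
  calc ∑ i, ‖g i - gbar‖ ^ 2
      ≤ ∑ i, (3 * ‖g i - h i‖ ^ 2 + 3 * ‖h i - G‖ ^ 2 + 3 * ‖G - gbar‖ ^ 2) :=
        Finset.sum_le_sum fun i _ => hpt i
    _ = 3 * (∑ i, ‖g i - h i‖ ^ 2) + 3 * (∑ i, ‖h i - G‖ ^ 2) + (n:ℝ) * (3 * ‖G - gbar‖ ^ 2) := by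
        simp [Finset.sum_add_distrib, Finset.mul_sum, Finset.sum_const]
    _ ≤ 3 * (L^2 * S) + 3 * (∑ i, ‖h i - G‖ ^ 2) + (n:ℝ) * (3 * ((L^2/n) * S)) := by
        have hGg : ‖G - gbar‖ ^ 2 ≤ (L ^ 2 / n) * S := by rw [norm_sub_rev]; exact hC
        gcongr
    _ = 6 * L ^ 2 * S + 3 * ∑ i, ‖h i - G‖ ^ 2 := by field_simp; ring
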